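/- Let X be a compact Hausdorff topological space, F : X → X continuous, and T_F the Koopman operator on the Banach space C(X, ℝ) of continuous real-valued functions with the supremum norm, defined by (T_F φ)(x) = φ(F x). Then the range of T_F − I is a closed subspace of C(X, ℝ) (i.e., the cohomological equation is normally solvable in C(X)) if and only if F is preperiodic, i.e. there exist integers l ≥ 0 and p ≥ 1 with F^{l+p} = F^{l}. -/

import Mathlib

/-- If every point has an orbit collision before time `N`, then `F` is preperiodic. -/
private lemma key_inj {X : Type*} (F : X → X)
    (h : ¬ ∃ (l p : ℕ), 1 ≤ p ∧ F^[l + p] = F^[l]) (N : ℕ) :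
    ∃ x : X, ∀ i j, i < j → j < N → F^[i] x ≠ F^[j] x := by
  by_contra hc
  push_neg at hc
  apply h
  refine ⟨N, N.factorial, N.factorial_pos, funext fun x => ?_⟩
  obtain ⟨i, j, hij, hjN, heq⟩ := hc x
  set q := j - i with hq
  have hq1 : 1 ≤ q := by omega
  have hqN : q ≤ N := by omega
  have hdvd : q ∣ N.factorial := Nat.dvd_factorial hq1 hqN
  have hiq : F^[i + q] x = F^[i] x := by
    have hji : i + q = j := by omega
    rw [hji]; exact heq.symm
  have hm : ∀ m, F^[i + m * q] x = F^[i] x := by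
    intro m
    induction m with
    | zero => simp
    | succ m ih =>
      have e : i + (m + 1) * q = q + (i + m * q) := by ring
      rw [e, Function.iterate_add_apply, ih, ← Function.iterate_add_apply]
      have e2 : q + i = i + q := by omega
      rw [e2, hiq]
  obtain ⟨c, hc'⟩ := hdvd
  have e : N + N.factorial = (N - i) + (i + c * q) := by
    rw [hc', Nat.mul_comm]; omega
  calc F^[N + N.factorial] x = F^[(N - i) + (i + c * q)] x := by rw [e]
    _ = F^[N - i] (F^[i + c * q] x) := Function.iterate_add_apply F _ _ x
    _ = F^[N - i] (F^[i] x) := by rw [hm c]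
    _ = F^[N] x := by
        rw [← Function.iterate_add_apply]
        congr 1
        omega

/-- Arithmetic core of the solvability direction. -/
private lemma aux_solve (g : ℕ → ℝ) (l p : ℕ) (hp : 1 ≤ p) (hper : g (l + p) = g l)
    (hS : ∑ k ∈ Finset.range p, g (l + k) = 0) :
    (((p : ℝ)⁻¹ * ∑ k ∈ Finset.range p, (k : ℝ) * g (l + k + 1))
        - ∑ j ∈ Finset.range l, g (j + 1))
      - (((p : ℝ)⁻¹ * ∑ k ∈ Finset.range p, (k : ℝ) * g (l + k))
        - ∑ j ∈ Finset.range l, g j) = g 0 := by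
  have hp0 : (p : ℝ) ≠ 0 := by positivity
  have h1 : ∑ j ∈ Finset.range l, g (j + 1) - ∑ j ∈ Finset.range l, g j = g l - g 0 := by
    rw [← Finset.sum_sub_distrib]
    exact Finset.sum_range_sub g l
  have h3 : ∑ k ∈ Finset.range p, g (l + k + 1) = 0 := by
    have hsucc' := Finset.sum_range_succ' (fun k => g (l + k)) p
    have hsucc := Finset.sum_range_succ (fun k => g (l + k)) p
    have e : ∀ k, l + (k + 1) = l + k + 1 := fun k => by omega
    simp only [e] at hsucc'
    simp only [hsucc, hS, hper] at hsucc'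
    simpa using hsucc'.symm
  have h2 : ∑ k ∈ Finset.range p, ((k : ℝ) + 1) * g (l + k + 1)
      - ∑ k ∈ Finset.range p, (k : ℝ) * g (l + k) = (p : ℝ) * g l := by
    rw [← Finset.sum_sub_distrib]
    have := Finset.sum_range_sub (fun k => (k : ℝ) * g (l + k)) p
    push_cast at this
    have e : ∀ k, l + (k + 1) = l + k + 1 := fun k => by omega
    simp only [e] at this
    rw [this, hper]
    ring
  have h4 : ∑ k ∈ Finset.range p, (k : ℝ) * g (l + k + 1)
      - ∑ k ∈ Finset.range p, (k : ℝ) * g (l + k) = (p : ℝ) * g l := by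
    have expand : ∑ k ∈ Finset.range p, ((k : ℝ) + 1) * g (l + k + 1)
        = ∑ k ∈ Finset.range p, (k : ℝ) * g (l + k + 1)
          + ∑ k ∈ Finset.range p, g (l + k + 1) := by
      rw [← Finset.sum_add_distrib]
      apply Finset.sum_congr rfl
      intro k _
      ring
    rw [expand, h3, add_zero] at h2
    exact h2
  have : (p : ℝ)⁻¹ * (∑ k ∈ Finset.range p, (k : ℝ) * g (l + k + 1)
      - ∑ k ∈ Finset.range p, (k : ℝ) * g (l + k)) = g l := by
    rw [h4]
    field_simp
  nlinarith [this, h1]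

/-- for a compact Hausdorff space `X` and continuous `F : X → X`, the
range of `T_F − I` on `C(X, ℝ)` (with `T_F φ = φ ∘ F`) is closed (normal solvability
of the cohomological equation in `C(X)`) iff `F` is preperiodic,
i.e. `F^{l+p} = F^{l}` for some `l ≥ 0`, `p ≥ 1`. -/
theorem normally_solvable_iff_preperiodic
    {X : Type*} [TopologicalSpace X] [CompactSpace X] [T2Space X]
    (F : X → X) (hF : Continuous F) :
    IsClosed (Set.range fun φ : C(X, ℝ) => φ.comp ⟨F, hF⟩ - φ) ↔
      ∃ (l p : ℕ), 1 ≤ p ∧ F^[l + p] = F^[l] := by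
  set Fc : ℕ → C(X, X) := fun m => ⟨F^[m], hF.iterate m⟩ with hFc
  classical
  have hcomp : ∀ g : C(X, X), Continuous fun γ : C(X, ℝ) => γ.comp g := by
    intro g
    have hlip : LipschitzWith 1 fun γ : C(X, ℝ) => γ.comp g := by
      apply LipschitzWith.of_dist_le_mul
      intro γ γ'
      rw [NNReal.coe_one, one_mul]
      refine (ContinuousMap.dist_le dist_nonneg).2 fun x => ?_
      exact ContinuousMap.dist_apply_le_dist (g x)
    exact hlip.continuous
  constructor
  · -- closed range ⇒ preperiodic
    intro hclosed
    by_contra hnp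
    -- the Koopman coboundary operator as a continuous linear map
    let T : C(X, ℝ) →ₗ[ℝ] C(X, ℝ) :=
      { toFun := fun φ => φ.comp ⟨F, hF⟩ - φ
        map_add' := by intro φ ψ; ext y; simp; ring
        map_smul' := by intro c φ; ext y; simp; ring }
    have hTbound : ∀ φ : C(X, ℝ), ‖T φ‖ ≤ 2 * ‖φ‖ := by
      intro φ
      have h1 : ‖φ.comp ⟨F, hF⟩‖ ≤ ‖φ‖ :=
        (ContinuousMap.norm_le _ (norm_nonneg φ)).2 fun y => φ.norm_coe_le_norm (F y)
      calc ‖T φ‖ = ‖φ.comp ⟨F, hF⟩ - φ‖ := rfl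
        _ ≤ ‖φ.comp ⟨F, hF⟩‖ + ‖φ‖ := norm_sub_le _ _
        _ ≤ 2 * ‖φ‖ := by linarith
    let A : C(X, ℝ) →L[ℝ] C(X, ℝ) := T.mkContinuous 2 hTbound
    have hA : ∀ φ : C(X, ℝ), A φ = φ.comp ⟨F, hF⟩ - φ := fun φ => rfl
    have hrange : (LinearMap.range (A : C(X, ℝ) →ₗ[ℝ] C(X, ℝ)) : Set C(X, ℝ))
        = Set.range fun φ : C(X, ℝ) => φ.comp ⟨F, hF⟩ - φ := by
      ext γ
      simp only [SetLike.mem_coe, LinearMap.mem_range, Set.mem_range]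
      constructor
      · rintro ⟨φ, rfl⟩; exact ⟨φ, (hA φ).symm⟩
      · rintro ⟨φ, rfl⟩; exact ⟨φ, hA φ⟩
    have hclosed' : IsClosed (LinearMap.range (A : C(X, ℝ) →ₗ[ℝ] C(X, ℝ)) : Set C(X, ℝ)) := by
      rw [hrange]; exact hclosed
    haveI : CompleteSpace (LinearMap.range (A : C(X, ℝ) →ₗ[ℝ] C(X, ℝ))) := hclosed'.completeSpace_coe
    let A' : C(X, ℝ) →L[ℝ] LinearMap.range (A : C(X, ℝ) →ₗ[ℝ] C(X, ℝ)) :=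
      A.codRestrict (LinearMap.range (A : C(X, ℝ) →ₗ[ℝ] C(X, ℝ))) fun φ => LinearMap.mem_range.2 ⟨φ, rfl⟩
    have hsurj : Function.Surjective A' := by
      rintro ⟨y, hy⟩
      obtain ⟨φ, rfl⟩ := LinearMap.mem_range.1 hy
      exact ⟨φ, rfl⟩
    obtain ⟨C, hC0, hC⟩ := ContinuousLinearMap.exists_preimage_norm_le (𝕜 := ℝ) (𝕜' := ℝ) (σ := RingHom.id ℝ) (E := C(X, ℝ)) (F := LinearMap.range (A : C(X, ℝ) →ₗ[ℝ] C(X, ℝ))) (f := A') hsurj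
    -- pick n with (n:ℝ) > 2*C
    set n : ℕ := ⌈2 * C⌉₊ + 1 with hn
    have hnC : (2 : ℝ) * C < n := by
      have := Nat.le_ceil (2 * C)
      push_cast [hn]
      linarith
    have hn1 : 1 ≤ n := by omega
    -- a point with injective orbit segment of length 2n
    obtain ⟨x, hinj⟩ := key_inj F hnp (2 * n)
    -- Urysohn function: 1 on the first half orbit, -1 on the second half
    set s : Set X := ↑((Finset.range n).image fun k => F^[k] x) with hs_def
    set t : Set X := ↑((Finset.Ico n (2 * n)).image fun k => F^[k] x) with ht_def
    have hs : IsClosed s := (Finset.finite_toSet _).isClosed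
    have ht : IsClosed t := (Finset.finite_toSet _).isClosed
    have hdisj : Disjoint s t := by
      rw [Set.disjoint_left]
      rintro y hy hyt
      simp only [hs_def, ht_def, Finset.coe_image, Set.mem_image, Finset.mem_coe,
        Finset.mem_range, Finset.mem_Ico] at hy hyt
      obtain ⟨i, hi, rfl⟩ := hy
      obtain ⟨j, ⟨hj1, hj2⟩, hji⟩ := hyt
      exact hinj i j (by omega) (by omega) hji.symm
    obtain ⟨f, hf0, hf1, hf01⟩ := exists_continuous_zero_one_of_isClosed hs ht hdisj
    set φ : C(X, ℝ) := ContinuousMap.const X 1 - (2 : ℝ) • f with hφ_def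
    have hφs : ∀ k, k < n → φ (F^[k] x) = 1 := by
      intro k hk
      have hmem : F^[k] x ∈ s := by
        simp only [hs_def, Finset.coe_image, Set.mem_image, Finset.mem_coe, Finset.mem_range]
        exact ⟨k, hk, rfl⟩
      have : f (F^[k] x) = 0 := hf0 hmem
      simp [hφ_def, this]
    have hφt : ∀ k, n ≤ k → k < 2 * n → φ (F^[k] x) = -1 := by
      intro k hk1 hk2
      have hmem : F^[k] x ∈ t := by
        simp only [ht_def, Finset.coe_image, Set.mem_image, Finset.mem_coe, Finset.mem_Ico]
        exact ⟨k, ⟨hk1, hk2⟩, rfl⟩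
      have : f (F^[k] x) = 1 := hf1 hmem
      simp [hφ_def, this]
      norm_num
    have hφnorm : ∀ y, |φ y| ≤ 1 := by
      intro y
      have := hf01 y
      simp only [Set.mem_Icc] at this
      simp only [hφ_def, ContinuousMap.sub_apply, ContinuousMap.const_apply,
        ContinuousMap.smul_apply, smul_eq_mul]
      rw [abs_le]
      constructor <;> linarith [this.1, this.2]
    -- ψ is the Birkhoff sum of φ; γ := Aψ = φ∘Fⁿ − φ
    set ψ : C(X, ℝ) := ∑ k ∈ Finset.range n, φ.comp (Fc k) with hψ_def
    set γ : C(X, ℝ) := A ψ with hγ_def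
    have hγpt : ∀ y, γ y = φ (F^[n] y) - φ y := by
      intro y
      have e1 : γ y = ψ (F y) - ψ y := by
        rw [hγ_def, hA]
        simp
      rw [e1, hψ_def]
      simp only [ContinuousMap.coe_sum, Finset.sum_apply, ContinuousMap.comp_apply]
      have e2 : ∀ k, (Fc k) (F y) = F^[k + 1] y := by
        intro k
        simp only [hFc, ContinuousMap.coe_mk]
        exact (Function.iterate_succ_apply F k y).symm
      have e3 : ∀ k, (Fc k) y = F^[k] y := fun k => rfl
      simp only [e2, e3]
      rw [← Finset.sum_sub_distrib]
      exact Finset.sum_range_sub (fun k => φ (F^[k] y)) n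
    have hγnorm : ‖γ‖ ≤ 2 := by
      refine (ContinuousMap.norm_le _ (by norm_num)).2 fun y => ?_
      rw [Real.norm_eq_abs, hγpt y]
      calc |φ (F^[n] y) - φ y| ≤ |φ (F^[n] y)| + |φ y| := abs_sub _ _
        _ ≤ 2 := by linarith [hφnorm (F^[n] y), hφnorm y]
    have hγmem : γ ∈ LinearMap.range (A : C(X, ℝ) →ₗ[ℝ] C(X, ℝ)) := LinearMap.mem_range.2 ⟨ψ, rfl⟩
    obtain ⟨η, hη1, hη2⟩ := hC ⟨γ, hγmem⟩
    have hAη : A η = γ := congrArg Subtype.val hη1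
    have hηnorm : ‖η‖ ≤ C * ‖γ‖ := by simpa using hη2
    have hηpt : ∀ y, η (F y) - η y = γ y := by
      intro y
      have := congrArg (fun u : C(X, ℝ) => u y) hAη
      simpa [hA] using this
    -- telescoping Birkhoff sum of γ along the orbit of x
    have hsum : ∑ k ∈ Finset.range n, γ (F^[k] x) = η (F^[n] x) - η x := by
      have hts := Finset.sum_range_sub (fun k => η (F^[k] x)) n
      simp only [Function.iterate_zero_apply] at hts
      rw [← hts]
      apply Finset.sum_congr rfl
      intro k _
      rw [Function.iterate_succ_apply' F k x]
      exact (hηpt (F^[k] x)).symm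
    have hval : ∑ k ∈ Finset.range n, γ (F^[k] x) = -(2 * (n : ℝ)) := by
      have : ∀ k ∈ Finset.range n, γ (F^[k] x) = -2 := by
        intro k hk
        rw [Finset.mem_range] at hk
        rw [hγpt (F^[k] x)]
        have e : F^[n] (F^[k] x) = F^[n + k] x := (Function.iterate_add_apply F n k x).symm
        rw [e, hφt (n + k) (by omega) (by omega), hφs k hk]
        norm_num
      rw [Finset.sum_congr rfl this]
      simp
      ring
    have hbound : (2 : ℝ) * n ≤ 2 * (C * ‖γ‖) := by
      have h5 : |η (F^[n] x) - η x| ≤ 2 * ‖η‖ := by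
        calc |η (F^[n] x) - η x| ≤ |η (F^[n] x)| + |η x| := abs_sub _ _
          _ ≤ 2 * ‖η‖ := by
              have a1 := η.norm_coe_le_norm (F^[n] x)
              have a2 := η.norm_coe_le_norm x
              rw [Real.norm_eq_abs] at a1 a2
              linarith
      have : (2 : ℝ) * n = |∑ k ∈ Finset.range n, γ (F^[k] x)| := by
        rw [hval, abs_neg, abs_of_nonneg (by positivity)]
      rw [this, hsum]
      calc |η (F^[n] x) - η x| ≤ 2 * ‖η‖ := h5
        _ ≤ 2 * (C * ‖γ‖) := by linarith
    have : (2 : ℝ) * n ≤ 4 * C := by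
      have : C * ‖γ‖ ≤ C * 2 := by
        apply mul_le_mul_of_nonneg_left hγnorm (le_of_lt hC0)
      linarith
    linarith
  · -- preperiodic ⇒ closed range
    rintro ⟨l, p, hp, hlp⟩
    have hLcont : Continuous fun γ : C(X, ℝ) =>
        ∑ k ∈ Finset.range p, γ.comp (Fc (l + k)) := by
      apply continuous_finset_sum
      intro k _
      exact hcomp (Fc (l + k))
    have hset : (Set.range fun φ : C(X, ℝ) => φ.comp ⟨F, hF⟩ - φ)
        = {γ : C(X, ℝ) | ∑ k ∈ Finset.range p, γ.comp (Fc (l + k)) = 0} := by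
      ext γ
      simp only [Set.mem_range, Set.mem_setOf_eq]
      constructor
      · rintro ⟨φ, rfl⟩
        ext y
        simp only [ContinuousMap.coe_sum, Finset.sum_apply, ContinuousMap.comp_apply,
          ContinuousMap.sub_apply, ContinuousMap.zero_apply, ContinuousMap.coe_mk, hFc]
        have e : ∀ k : ℕ, φ (F (F^[l + k] y)) - φ (F^[l + k] y)
            = (fun m => φ (F^[l + m] y)) (k + 1) - (fun m => φ (F^[l + m] y)) k := by
          intro k
          simp only []
          have ee : l + (k + 1) = (l + k) + 1 := by omega
          rw [ee, Function.iterate_succ_apply' F (l + k) y]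
        calc ∑ k ∈ Finset.range p, (φ (F (F^[l + k] y)) - φ (F^[l + k] y))
            = ∑ k ∈ Finset.range p,
              ((fun m => φ (F^[l + m] y)) (k + 1) - (fun m => φ (F^[l + m] y)) k) :=
              Finset.sum_congr rfl fun k _ => e k
          _ = φ (F^[l + p] y) - φ (F^[l + 0] y) :=
              Finset.sum_range_sub (fun m => φ (F^[l + m] y)) p
          _ = 0 := by rw [hlp]; simp
      · intro h0
        refine ⟨(p : ℝ)⁻¹ • (∑ k ∈ Finset.range p, (k : ℝ) • γ.comp (Fc (l + k)))
          - ∑ j ∈ Finset.range l, γ.comp (Fc j), ?_⟩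
        ext y
        have hS : ∑ k ∈ Finset.range p, γ (F^[l + k] y) = 0 := by
          have := congrArg (fun u : C(X, ℝ) => u y) h0
          simpa [ContinuousMap.coe_sum, Finset.sum_apply, hFc] using this
        have hper : γ (F^[l + p] y) = γ (F^[l] y) := by
          rw [hlp]
        have key := aux_solve (fun m => γ (F^[m] y)) l p hp hper hS
        simp only [ContinuousMap.sub_apply, ContinuousMap.comp_apply,
          ContinuousMap.smul_apply, ContinuousMap.coe_sum, Finset.sum_apply,
          ContinuousMap.coe_mk, smul_eq_mul, hFc]
        have eF : ∀ m : ℕ, F^[m] (F y) = F^[m + 1] y := by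
          intro m
          exact (Function.iterate_succ_apply F m y).symm
        simp only [eF]
        have e1 : ∀ k : ℕ, l + k + 1 = l + k + 1 := fun _ => rfl
        -- rewrite to match aux_solve
        exact key
    rw [hset]
    exact isClosed_eq hLcont continuous_const
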